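/- The zero-function φ_a is strictly increasing in s on its domain: if s₁ < s₂ and both φ_a(s₁), φ_a(s₂) are finite, then φ_a(s₁) < φ_a(s₂). -/

import Mathlib

open Set Filter Topology

/-- If `u s = 0` and `u` has positive derivative at `s`, then `u > 0` just to the right. -/
lemma aux_pos_right {u : ℝ → ℝ} {s d : ℝ} (hu : u s = 0) (hd : HasDerivAt u d s)
    (hdp : 0 < d) : ∃ c, s < c ∧ ∀ t, s < t → t < c → 0 < u t := by
  have hslope := hasDerivAt_iff_tendsto_slope.mp hd
  have h1 : Tendsto (slope u s) (𝓝[>] s) (𝓝 d) :=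
    hslope.mono_left (nhdsWithin_mono _ (fun x hx => ne_of_gt hx))
  have h2 : ∀ᶠ t in 𝓝[>] s, 0 < slope u s t := h1.eventually (eventually_gt_nhds hdp)
  rw [eventually_iff, mem_nhdsGT_iff_exists_Ioo_subset] at h2
  obtain ⟨c, hc, hsub⟩ := h2
  refine ⟨c, hc, fun t ht htc => ?_⟩
  have := hsub ⟨ht, htc⟩
  simp only [mem_setOf_eq, slope_def_field] at this
  have h3 : 0 < (u t - u s) / (t - s) := this
  rw [hu, sub_zero] at h3
  have := mul_pos h3 (sub_pos.mpr ht)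
  rwa [div_mul_cancel₀ _ (ne_of_gt (sub_pos.mpr ht))] at this

/-- The zero-function `φ_a` is strictly increasing in `s` on its
domain: if `s₁ < s₂` and both first zeros are finite, then `φ_a(s₁) < φ_a(s₂)`.
Here `u₁, u₂` are the solutions of `-(p u')' + q u = a·m·u` vanishing at `s₁`
resp. `s₂` with `u'(sᵢ) = 1/p(sᵢ)`. -/
theorem zero_function_strictMono_in_s
    (p q m : ℝ → ℝ) (a s₁ s₂ : ℝ) (u₁ u₁' u₂ u₂' : ℝ → ℝ)
    (hp : Continuous p) (hq : Continuous q) (hm : Continuous m)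
    (hppos : ∀ t, 0 < p t) (hqnn : ∀ t, 0 ≤ q t)
    (hu₁s : u₁ s₁ = 0) (hu₁'s : u₁' s₁ = 1 / p s₁)
    (hderiv₁ : ∀ t, HasDerivAt u₁ (u₁' t) t)
    (hODE₁ : ∀ t, HasDerivAt (fun τ => p τ * u₁' τ) (q t * u₁ t - a * m t * u₁ t) t)
    (hu₂s : u₂ s₂ = 0) (hu₂'s : u₂' s₂ = 1 / p s₂)
    (hderiv₂ : ∀ t, HasDerivAt u₂ (u₂' t) t)
    (hODE₂ : ∀ t, HasDerivAt (fun τ => p τ * u₂' τ) (q t * u₂ t - a * m t * u₂ t) t)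
    (hs : s₁ < s₂)
    (hne₁ : {t | s₁ < t ∧ u₁ t = 0}.Nonempty)
    (hne₂ : {t | s₂ < t ∧ u₂ t = 0}.Nonempty) :
    sInf {t | s₁ < t ∧ u₁ t = 0} < sInf {t | s₂ < t ∧ u₂ t = 0} := by
  set S₁ := {t | s₁ < t ∧ u₁ t = 0} with hS₁
  set S₂ := {t | s₂ < t ∧ u₂ t = 0} with hS₂
  set z₁ := sInf S₁ with hz₁
  set z₂ := sInf S₂ with hz₂
  have hcont₁ : Continuous u₁ := by
    rw [continuous_iff_continuousAt]; exact fun t => (hderiv₁ t).continuousAt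
  have hcont₂ : Continuous u₂ := by
    rw [continuous_iff_continuousAt]; exact fun t => (hderiv₂ t).continuousAt
  have hbdd₁ : BddBelow S₁ := ⟨s₁, fun t ht => le_of_lt ht.1⟩
  have hbdd₂ : BddBelow S₂ := ⟨s₂, fun t ht => le_of_lt ht.1⟩
  -- local positivity to the right of s₁ and s₂
  obtain ⟨c₁, hc₁, hpos₁⟩ := aux_pos_right hu₁s (hderiv₁ s₁)
    (by rw [hu₁'s]; exact one_div_pos.mpr (hppos s₁))
  obtain ⟨c₂, hc₂, hpos₂⟩ := aux_pos_right hu₂s (hderiv₂ s₂)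
    (by rw [hu₂'s]; exact one_div_pos.mpr (hppos s₂))
  -- z₁ ≥ c₁ > s₁, z₂ ≥ c₂ > s₂
  have hz₁c : c₁ ≤ z₁ := le_csInf hne₁ (fun t ht => by
    by_contra h
    exact absurd ht.2 (ne_of_gt (hpos₁ t ht.1 (lt_of_not_ge h))))
  have hz₂c : c₂ ≤ z₂ := le_csInf hne₂ (fun t ht => by
    by_contra h
    exact absurd ht.2 (ne_of_gt (hpos₂ t ht.1 (lt_of_not_ge h))))
  have hs₁z₁ : s₁ < z₁ := lt_of_lt_of_le hc₁ hz₁c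
  have hs₂z₂ : s₂ < z₂ := lt_of_lt_of_le hc₂ hz₂c
  -- z₁, z₂ are zeros
  have hmem : ∀ (S : Set ℝ) (u : ℝ → ℝ), Continuous u → S.Nonempty → BddBelow S →
      (∀ t ∈ S, u t = 0) → u (sInf S) = 0 := by
    intro S u hu hSne hSbdd hSz
    have h1 : sInf S ∈ closure S := csInf_mem_closure hSne hSbdd
    have h2 : closure S ⊆ {t | u t = 0} :=
      closure_minimal hSz (isClosed_eq hu continuous_const)
    exact h2 h1
  have hu₁z₁ : u₁ z₁ = 0 := hmem S₁ u₁ hcont₁ hne₁ hbdd₁ (fun t ht => ht.2)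
  have hu₂z₂ : u₂ z₂ = 0 := hmem S₂ u₂ hcont₂ hne₂ hbdd₂ (fun t ht => ht.2)
  -- no zeros in the open intervals
  have hnz₁ : ∀ t, s₁ < t → t < z₁ → u₁ t ≠ 0 := fun t ht htz h =>
    absurd (csInf_le hbdd₁ ⟨ht, h⟩) (not_le.mpr htz)
  have hnz₂ : ∀ t, s₂ < t → t < z₂ → u₂ t ≠ 0 := fun t ht htz h =>
    absurd (csInf_le hbdd₂ ⟨ht, h⟩) (not_le.mpr htz)
  -- positivity on the open intervals
  have hposOpen : ∀ (u : ℝ → ℝ) (s c z : ℝ), Continuous u → s < c → c ≤ z →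
      (∀ t, s < t → t < c → 0 < u t) → (∀ t, s < t → t < z → u t ≠ 0) →
      ∀ t, s < t → t < z → 0 < u t := by
    intro u s c z hu hsc hcz hposc hnz t hst htz
    rcases lt_or_ge t c with h | h
    · exact hposc t hst h
    · -- pick w ∈ (s, c), use IVT on [w, t]
      set w := (s + c) / 2 with hw
      have hsw : s < w := by simp only [hw]; linarith
      have hwc : w < c := by simp only [hw]; linarith
      have hwt : w ≤ t := le_trans (le_of_lt hwc) h
      have huw : 0 < u w := hposc w hsw hwc
      by_contra hle
      push_neg at hle
      have hiv := intermediate_value_Icc' hwt (hu.continuousOn (s := Icc w t))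
      have h0 : (0 : ℝ) ∈ Icc (u t) (u w) := ⟨hle, le_of_lt huw⟩
      obtain ⟨r, hr, hur⟩ := hiv h0
      exact hnz r (lt_of_lt_of_le hsw hr.1) (lt_of_le_of_lt hr.2 htz) hur
  have hpos₁' : ∀ t, s₁ < t → t < z₁ → 0 < u₁ t :=
    hposOpen u₁ s₁ c₁ z₁ hcont₁ hc₁ hz₁c hpos₁ hnz₁
  have hpos₂' : ∀ t, s₂ < t → t < z₂ → 0 < u₂ t :=
    hposOpen u₂ s₂ c₂ z₂ hcont₂ hc₂ hz₂c hpos₂ hnz₂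
  -- u₂' z₂ ≤ 0
  have hu₂'z₂ : u₂' z₂ ≤ 0 := by
    have hslope := hasDerivAt_iff_tendsto_slope.mp (hderiv₂ z₂)
    have h1 : Tendsto (slope u₂ z₂) (𝓝[<] z₂) (𝓝 (u₂' z₂)) :=
      hslope.mono_left (nhdsWithin_mono _ (fun x hx => ne_of_lt hx))
    have h2 : ∀ᶠ t in 𝓝[<] z₂, slope u₂ z₂ t ≤ 0 := by
      filter_upwards [Ioo_mem_nhdsLT_of_mem (b := z₂) ⟨hs₂z₂, le_refl _⟩] with t ht
      rw [slope_def_field, div_nonpos_iff]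
      left
      constructor
      · rw [hu₂z₂, sub_zero]; exact le_of_lt (hpos₂' t ht.1 ht.2)
      · linarith [ht.2]
    exact le_of_tendsto h1 h2
  -- the Wronskian is constant
  set W := fun t => u₁ t * (p t * u₂' t) - u₂ t * (p t * u₁' t) with hWdef
  have hW : ∀ t, HasDerivAt W 0 t := by
    intro t
    have h : HasDerivAt W _ t := ((hderiv₁ t).mul (hODE₂ t)).sub ((hderiv₂ t).mul (hODE₁ t))
    convert h using 1
    ring
  have hWconst : W s₂ = W z₂ :=
    is_const_of_deriv_eq_zero (fun t => (hW t).differentiableAt)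
      (fun t => (hW t).deriv) s₂ z₂
  -- final contradiction
  by_contra hcon
  push_neg at hcon  -- z₂ ≤ z₁
  have hs₂z₁ : s₂ < z₁ := lt_of_lt_of_le hs₂z₂ hcon
  have hWs₂ : W s₂ = u₁ s₂ := by
    simp only [hWdef, hu₂s, hu₂'s, zero_mul, sub_zero]
    rw [mul_one_div, div_self (hppos s₂).ne', mul_one]
  have hWz₂ : W z₂ = u₁ z₂ * (p z₂ * u₂' z₂) := by
    simp only [hWdef, hu₂z₂, zero_mul, sub_zero]
  have h1 : 0 < u₁ s₂ := hpos₁' s₂ hs hs₂z₁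
  have h2 : 0 ≤ u₁ z₂ := by
    rcases eq_or_lt_of_le hcon with h | h
    · rw [h, hu₁z₁]
    · exact le_of_lt (hpos₁' z₂ (lt_trans hs hs₂z₂) h)
  have h3 : p z₂ * u₂' z₂ ≤ 0 := mul_nonpos_of_nonneg_of_nonpos (le_of_lt (hppos z₂)) hu₂'z₂
  have h4 : W z₂ ≤ 0 := by rw [hWz₂]; exact mul_nonpos_of_nonneg_of_nonpos h2 h3
  linarith [hWconst, hWs₂, hWz₂]
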